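/- Let f : A → X and g : B → X be maps in a category C, and let yo^∅ : C → Psh^∅(C) be the Yoneda embedding into reduced presheaves (presheaves of spaces preserving terminal objects). Then f and g are disjoint in C if and only if yo^∅(f) and yo^∅(g) are disjoint in Psh^∅(C); consequently, g is a complement of f in C if and only if yo^∅(g) is a complement of yo^∅(f) in Psh^∅(C). -/

import Mathlib

open CategoryTheory Limits Opposite

universe v u

/-- Maps `i : Z ⟶ X` and `j : U ⟶ X` are *disjoint* if every commutative square
over them has initial top-left vertex. -/
def AreDisjoint {C : Type u} [Category.{v} C] {Z X U : C} (i : Z ⟶ X) (j : U ⟶ X) : Prop :=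
  ∀ (A : C) (a : A ⟶ Z) (b : A ⟶ U), a ≫ i = b ≫ j → Nonempty (IsInitial A)

/-- `j` is a complement of `i`. -/
def IsComplementOf {C : Type u} [Category.{v} C] {Z X U : C} (i : Z ⟶ X) (j : U ⟶ X) : Prop :=
  Mono j ∧ AreDisjoint i j ∧
    ∀ (V : C) (v : V ⟶ X), AreDisjoint i v → ∃ k : V ⟶ U, k ≫ j = v

variable (C : Type u) [Category.{v} C]

/-- The category of *reduced* presheaves on `C`: presheaves sending initial
objects of `C` (terminal objects of `Cᵒᵖ`) to terminal types (singletons). -/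
def ReducedPsh : Type max u (v + 1) :=
  ObjectProperty.FullSubcategory (fun F : Cᵒᵖ ⥤ Type v =>
    ∀ (I : C), IsInitial I → Nonempty (Unique (F.obj (op I))))

instance : Category (ReducedPsh C) :=
  ObjectProperty.FullSubcategory.category _

/-- The Yoneda embedding lands in reduced presheaves. -/
def yoRed : C ⥤ ReducedPsh C :=
  ObjectProperty.lift _ yoneda
    (fun X I hI => ⟨⟨⟨hI.to X⟩, fun a => hI.hom_ext a _⟩⟩)

section Aux

variable {C}

/-- A reduced presheaf supported only on initial objects is initial. -/
lemma redAux_isInitial (P : ReducedPsh C)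
    (h : ∀ c : Cᵒᵖ, P.obj.obj c → Nonempty (IsInitial c.unop)) :
    Nonempty (IsInitial P) := by
  refine ⟨IsInitial.ofUniqueHom (fun Q => ?_) (fun Q m => ?_)⟩
  · exact ObjectProperty.homMk
      { app := fun c => TypeCat.ofHom (fun x => ((Q.property c.unop (h c x).some).some).default)
        naturality := by
          intro c d m
          ext x
          letI : Unique (Q.obj.obj d) :=
            (Q.property d.unop (h d (P.obj.map m x)).some).some
          exact Subsingleton.elim _ _ }
  · apply ObjectProperty.hom_ext
    apply NatTrans.ext
    ext c x
    letI : Unique (Q.obj.obj c) := (Q.property c.unop (h c x).some).some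
    exact Subsingleton.elim _ _

lemma redAux_initial_unop {T : C} (hI : IsInitial ((yoRed C).obj T)) :
    Nonempty (IsInitial T) := by
  refine ⟨IsInitial.ofUniqueHom (fun c => yonedaEquiv (hI.to ((yoRed C).obj c)).hom)
    (fun c m => ?_)⟩
  have h1 : (yoRed C).map m = hI.to ((yoRed C).obj c) := hI.hom_ext _ _
  have h2 : yonedaEquiv ((yoneda.map m : yoneda.obj T ⟶ yoneda.obj c)) = m := by
    simp [yonedaEquiv]
  exact h2.symm.trans (congrArg (fun t => yonedaEquiv t.hom) h1)

end Aux
section Aux2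

variable {C : Type u} [Category.{v} C]

lemma redAux_disj_iff {A B X : C} (f : A ⟶ X) (g : B ⟶ X) :
    AreDisjoint f g ↔ AreDisjoint ((yoRed C).map f) ((yoRed C).map g) := by
  constructor
  · intro hd P a b hcomm
    refine redAux_isInitial P (fun c x => ?_)
    have h0 : a.hom.app c x ≫ f = b.hom.app c x ≫ g :=
      congrArg (fun t => t.hom.app c x) hcomm
    exact hd c.unop (a.hom.app c x) (b.hom.app c x) h0
  · intro hd T a b hcomm
    have := hd ((yoRed C).obj T) ((yoRed C).map a) ((yoRed C).map b)
      (by rw [← Functor.map_comp, ← Functor.map_comp, hcomm])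
    exact redAux_initial_unop this.some

lemma redAux_mono_iff {B X : C} (g : B ⟶ X) :
    Mono g ↔ Mono ((yoRed C).map g) := by
  constructor
  · intro hg
    constructor
    intro P α β e
    apply ObjectProperty.hom_ext
    apply NatTrans.ext
    ext c x
    have h0 : α.hom.app c x ≫ g = β.hom.app c x ≫ g :=
      congrArg (fun t => t.hom.app c x) e
    exact (cancel_mono g).mp h0
  · intro hg
    constructor
    intro T h k e
    have e' : (yoRed C).map h ≫ (yoRed C).map g = (yoRed C).map k ≫ (yoRed C).map g := by
      rw [← Functor.map_comp, ← Functor.map_comp, e]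
    have := (cancel_mono ((yoRed C).map g)).mp e'
    have h2 : 𝟙 T ≫ h = 𝟙 T ≫ k :=
      congrArg (fun t => t.hom.app (op T) (𝟙 T)) this
    simpa using h2

/-- The Yoneda map of an element `x : P(c)`. -/
def redAux_chi (P : ReducedPsh C) (c : Cᵒᵖ) (x : P.obj.obj c) :
    (yoRed C).obj c.unop ⟶ P :=
  ObjectProperty.homMk
  { app := fun d => TypeCat.ofHom (fun h => P.obj.map h.op x)
    naturality := by
      intro d e m
      ext h
      show P.obj.map (m.unop ≫ h).op x = P.obj.map m (P.obj.map h.op x)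
      rw [← FunctorToTypes.map_comp_apply]
      rfl }

lemma redAux_chi_comp {P : ReducedPsh C} {X : C} (v : P ⟶ (yoRed C).obj X)
    (c : Cᵒᵖ) (x : P.obj.obj c) :
    redAux_chi P c x ≫ v = (yoRed C).map (v.hom.app c x) := by
  apply ObjectProperty.hom_ext
  apply NatTrans.ext
  ext d h
  show v.hom.app d (P.obj.map h.op x) = h ≫ v.hom.app c x
  have : v.hom.app d (P.obj.map h.op x) = h ≫ v.hom.app c x :=
    v.hom.naturality_apply h.op x
  exact this

end Aux2

/-- Maps `f : A ⟶ X` and `g : B ⟶ X` in `C` are disjoint iff their images under the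
Yoneda embedding into reduced presheaves are disjoint; consequently `g` is a complement
of `f` in `C` iff `(yoRed C).map g` is a complement of `(yoRed C).map f`. -/
theorem areDisjoint_iff_yoneda_and_complement_iff_yoneda
    {A B X : C} (f : A ⟶ X) (g : B ⟶ X) :
    (AreDisjoint f g ↔ AreDisjoint ((yoRed C).map f) ((yoRed C).map g)) ∧
      (IsComplementOf f g ↔ IsComplementOf ((yoRed C).map f) ((yoRed C).map g)) := by
  refine ⟨redAux_disj_iff f g, ?_, ?_⟩
  · rintro ⟨hmono, hdisj, hext⟩
    refine ⟨(redAux_mono_iff g).mp hmono, (redAux_disj_iff f g).mp hdisj, ?_⟩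
    intro P v hv
    have key : ∀ (c : Cᵒᵖ) (x : P.obj.obj c),
        ∃ kk : c.unop ⟶ B, kk ≫ g = v.hom.app c x := by
      intro c x
      refine hext c.unop (v.hom.app c x) ?_
      intro T a b hab
      have hβ : (yoRed C).map a ≫ (yoRed C).map f =
          ((yoRed C).map b ≫ redAux_chi P c x) ≫ v := by
        rw [Category.assoc, redAux_chi_comp v c x, ← Functor.map_comp,
          hab]
        exact (yoRed C).map_comp _ _
      have := hv ((yoRed C).obj T) ((yoRed C).map a)
        ((yoRed C).map b ≫ redAux_chi P c x) hβ
      exact redAux_initial_unop this.some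
    refine ⟨ObjectProperty.homMk { app := fun c => TypeCat.ofHom (fun x => (key c x).choose), naturality := ?_ }, ?_⟩
    · intro c d m
      ext x
      have hm : Mono g := hmono
      apply (cancel_mono g).mp
      show (key d (P.obj.map m x)).choose ≫ g = (m.unop ≫ (key c x).choose) ≫ g
      rw [(key d (P.obj.map m x)).choose_spec, Category.assoc, (key c x).choose_spec]
      exact v.hom.naturality_apply m x
    · apply ObjectProperty.hom_ext
      apply NatTrans.ext
      ext c x
      exact (key c x).choose_spec
  · rintro ⟨hmono, hdisj, hext⟩
    refine ⟨(redAux_mono_iff g).mpr hmono, (redAux_disj_iff f g).mpr hdisj, ?_⟩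
    intro V v hv
    obtain ⟨K, hK⟩ := hext ((yoRed C).obj V) ((yoRed C).map v)
      ((redAux_disj_iff f v).mp hv)
    refine ⟨K.hom.app (op V) (𝟙 V), ?_⟩
    have h3 : K.hom.app (op V) (𝟙 V) ≫ g = 𝟙 V ≫ v :=
      congrArg (fun t => t.hom.app (op V) (𝟙 V)) hK
    simpa using h3
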